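/- Let (d_1, ..., d_n) be a non-decreasing sequence of non-negative real numbers satisfying condition II, i.e. d_i + d_{n+1-i} = n - 1 for all i = 1, ..., n. If Σ_{i=1}^{k} d_i ≥ binom(k,2) for every k = 1, 2, ..., ⌊n/2⌋, then (d_1, ..., d_n) satisfies condition I: for every subset J of {1,...,n}, Σ_{i∈J} d_i ≥ binom(|J|,2), with equality when J = {1,...,n}. -/

import Mathlib

/-- Condition I. -/
def CondI {n : ℕ} (d : Fin n → ℝ) : Prop :=
  (∀ J : Finset (Fin n), (J.card.choose 2 : ℝ) ≤ ∑ i ∈ J, d i) ∧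
  ∑ i, d i = (n.choose 2 : ℝ)

/-- Condition II: `d i + d (n+1-i) = n - 1` for all `i`. -/
def CondII {n : ℕ} (d : Fin n → ℝ) : Prop :=
  ∀ i : Fin n, d i + d i.rev = (n : ℝ) - 1

lemma card_filter_lt' (n m : ℕ) (hm : m ≤ n) :
    (Finset.univ.filter (fun i : Fin n => (i : ℕ) < m)).card = m := by
  have : (Finset.univ.filter (fun i : Fin n => (i : ℕ) < m))
      = Finset.univ.map ⟨fun k : Fin m => Fin.castLE hm k, fun a b hab => by
          simpa [Fin.ext_iff] using hab⟩ := by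
    ext i
    simp only [Finset.mem_filter, Finset.mem_univ, true_and, Finset.mem_map,
      Function.Embedding.coeFn_mk]
    constructor
    · intro hi; exact ⟨⟨i, hi⟩, by simp [Fin.ext_iff]; rfl⟩
    · rintro ⟨k, rfl⟩; exact k.2
  rw [this, Finset.card_map, Finset.card_univ, Fintype.card_fin]

lemma strictMono_le' {m n : ℕ} {f : Fin m → Fin n} (hf : StrictMono f) :
    ∀ k (hk : k < m), k ≤ (f ⟨k, hk⟩ : ℕ) := by
  intro k
  induction k with
  | zero => intro _; simp
  | succ k ih =>
    intro hk
    have hk' : k < m := Nat.lt_of_succ_lt hk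
    have h1 := ih hk'
    have h2 : f ⟨k, hk'⟩ < f ⟨k+1, hk⟩ := hf (by simp [Fin.lt_def])
    have := Fin.lt_def.mp h2
    omega

/-- For non-decreasing non-negative sequences satisfying condition II, condition I need
only be checked on the initial segments `{1, …, k}` for `k = 1, …, ⌊n/2⌋`. -/
theorem condI_of_half_initial_segments (n : ℕ) (d : Fin n → ℝ)
    (hmono : Monotone d) (hpos : ∀ i, 0 ≤ d i) (hII : CondII d)
    (h : ∀ k, 1 ≤ k → k ≤ n / 2 →
      (k.choose 2 : ℝ) ≤ ∑ i ∈ Finset.univ.filter (fun i : Fin n => (i : ℕ) < k), d i) :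
    CondI d := by
  set S : ℕ → ℝ := fun m => ∑ i ∈ Finset.univ.filter (fun i : Fin n => (i : ℕ) < m), d i
    with hS
  -- total sum
  have hrev : ∑ i, d (Fin.rev i) = ∑ i, d i := by
    have := Equiv.sum_comp (Fin.revPerm (n := n)) d
    simpa using this
  have htotal : ∑ i, d i = (n.choose 2 : ℝ) := by
    have h2 : 2 * ∑ i, d i = (n : ℝ) * ((n : ℝ) - 1) := by
      have : ∑ i : Fin n, (d i + d i.rev) = ∑ i : Fin n, ((n : ℝ) - 1) :=
        Finset.sum_congr rfl (fun i _ => hII i)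
      rw [Finset.sum_add_distrib, hrev] at this
      simp [Finset.sum_const, two_mul] at this; linarith
    rw [Nat.cast_choose_two]
    linarith
  have hSn : S n = ∑ i, d i := by
    rw [hS]
    simp [Finset.filter_true_of_mem (fun (i : Fin n) _ => i.isLt)]
  -- reflection identity
  have hrefl : ∀ m, m ≤ n → S n = S m + ((n : ℝ) - (m : ℝ)) * ((n : ℝ) - 1) - S (n - m) := by
    intro m hm
    have hsplit := Finset.sum_filter_add_sum_filter_not
      (Finset.univ : Finset (Fin n)) (fun i : Fin n => (i : ℕ) < m) d
    have hcompl : ∑ i ∈ Finset.univ.filter (fun i : Fin n => ¬ (i : ℕ) < m), d i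
        = ∑ j ∈ Finset.univ.filter (fun j : Fin n => (j : ℕ) < n - m),
            (((n : ℝ) - 1) - d j) := by
      refine Finset.sum_bij (fun (i : Fin n) _ => Fin.rev i) ?_ ?_ ?_ ?_
      · intro i hi
        simp only [Finset.mem_filter, Finset.mem_univ, true_and] at hi ⊢
        have := i.isLt
        simp only [Fin.val_rev]
        omega
      · intro a _ b _ hab
        exact Fin.rev_injective hab
      · intro j hj
        simp only [Finset.mem_filter, Finset.mem_univ, true_and] at hj
        refine ⟨Fin.rev j, ?_, by simp⟩
        simp only [Finset.mem_filter, Finset.mem_univ, true_and, Fin.val_rev]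
        have := j.isLt
        omega
      · intro i _
        have := hII i
        linarith
    have hcard : (Finset.univ.filter (fun j : Fin n => (j : ℕ) < n - m)).card = n - m :=
      card_filter_lt' n (n - m) (Nat.sub_le n m)
    have hsum : ∑ j ∈ Finset.univ.filter (fun j : Fin n => (j : ℕ) < n - m),
        (((n : ℝ) - 1) - d j)
        = ((n : ℝ) - (m : ℝ)) * ((n : ℝ) - 1) - S (n - m) := by
      rw [Finset.sum_sub_distrib, Finset.sum_const, hcard, nsmul_eq_mul, Nat.cast_sub hm]
    rw [hSn, ← hsplit, hcompl, hsum]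
    simp only [hS]
    ring
  -- key: initial segments for all m ≤ n
  have hkey : ∀ m, m ≤ n → (m.choose 2 : ℝ) ≤ S m := by
    have hS0 : ∀ m, (0 : ℝ) ≤ S m := fun m =>
      Finset.sum_nonneg (fun i _ => hpos i)
    intro m hm
    rcases Nat.eq_zero_or_pos m with rfl | hm1
    · simpa using hS0 0
    rcases le_or_gt m (n / 2) with hhalf | hhalf
    · exact h m hm1 hhalf
    · set r := n - m with hr
      have hrhalf : r ≤ n / 2 := by omega
      have hrS : (r.choose 2 : ℝ) ≤ S r := by
        rcases Nat.eq_zero_or_pos r with hr0 | hr1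
        · rw [hr0]; simpa using hS0 0
        · exact h r hr1 hrhalf
      have hid := hrefl m hm
      rw [hSn, htotal] at hid
      have hchoose : (m.choose 2 : ℝ)
          = (n.choose 2 : ℝ) - ((n : ℝ) - (m : ℝ)) * ((n : ℝ) - 1) + (r.choose 2 : ℝ) := by
        rw [Nat.cast_choose_two, Nat.cast_choose_two, Nat.cast_choose_two]
        have hrc : ((r : ℕ) : ℝ) = (n : ℝ) - (m : ℝ) := by
          rw [hr]; push_cast [Nat.cast_sub hm]; ring
        rw [hrc]; ring
      rw [hchoose]
      linarith
  constructor
  · intro J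
    set m := J.card with hmJ
    have hmn : m ≤ n := by
      simpa using Finset.card_le_card (Finset.subset_univ J)
    refine le_trans (hkey m hmn) ?_
    -- S m ≤ ∑ i ∈ J, d i
    have hbij : ∑ i ∈ J, d i = ∑ k : Fin m, d (J.orderEmbOfFin rfl k) := by
      rw [← Finset.sum_attach J (fun i => d i)]
      exact Fintype.sum_equiv (J.orderIsoOfFin rfl).symm _ _ (fun k => by
        simp [Finset.orderEmbOfFin])
    have hinit : S m = ∑ k : Fin m, d (Fin.castLE hmn k) := by
      rw [hS]
      refine (Finset.sum_bij (fun (k : Fin m) _ => Fin.castLE hmn k) ?_ ?_ ?_ ?_).symm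
      · intro k _
        simp only [Finset.mem_filter, Finset.mem_univ, true_and, Fin.coe_castLE]
        exact k.2
      · intro a _ b _ hab
        simpa [Fin.ext_iff] using hab
      · intro i hi
        simp only [Finset.mem_filter, Finset.mem_univ, true_and] at hi
        exact ⟨⟨i, hi⟩, by simp, by simp [Fin.ext_iff]⟩
      · intro k _; rfl
    rw [hinit, hbij]
    refine Finset.sum_le_sum (fun k _ => hmono ?_)
    have hsm : StrictMono (fun k : Fin m => (J.orderEmbOfFin rfl k : Fin n)) :=
      (J.orderEmbOfFin rfl).strictMono
    have := strictMono_le' hsm k.1 k.2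
    simpa [Fin.le_def] using this
  · rw [htotal]
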